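/- Let K be a field of characteristic zero and L : K be a finite field extension, and let N be a normal closure of L over K. Then L : K is radically (respectively quadratically) solvable if and only if N : K is radically (respectively quadratically) solvable. -/

import Mathlib

/-- A field extension `M : K` is a radical extension: there is a tower of intermediate
fields `K = K₁ ⊆ K₂ ⊆ … ⊆ K_t = M` with `K_{i+1} = K_i(x_i)` and `x_i ^ n_i ∈ K_i`
for some natural number `n_i > 0`. -/
def IsRadicalTower (K M : Type*) [Field K] [Field M] [Algebra K M] : Prop :=
  ∃ t : ℕ, ∃ c : Fin (t + 1) → IntermediateField K M,
    c 0 = ⊥ ∧ c (Fin.last t) = ⊤ ∧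
    ∀ i : Fin t, ∃ x : M, ∃ n : ℕ, 0 < n ∧ x ^ n ∈ c i.castSucc ∧
      c i.succ = c i.castSucc ⊔ IntermediateField.adjoin K {x}

/-- A quadratic extension: a radical extension with all `n_i = 2`. -/
def IsQuadraticTower (K M : Type*) [Field K] [Field M] [Algebra K M] : Prop :=
  ∃ t : ℕ, ∃ c : Fin (t + 1) → IntermediateField K M,
    c 0 = ⊥ ∧ c (Fin.last t) = ⊤ ∧
    ∀ i : Fin t, ∃ x : M, x ^ 2 ∈ c i.castSucc ∧
      c i.succ = c i.castSucc ⊔ IntermediateField.adjoin K {x}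

/-- `N : K` is radically solvable if `N` embeds (over `K`) into a radical extension
of `K`. -/
def RadicallySolvableExt (K : Type u) (N : Type v) [Field K] [Field N] [Algebra K N] :
    Prop :=
  ∃ (M : Type v) (_ : Field M) (_ : Algebra K M) (_ : N →ₐ[K] M), IsRadicalTower K M

/-- `N : K` is quadratically solvable if `N` embeds (over `K`) into a quadratic
extension of `K`. -/
def QuadraticallySolvableExt (K : Type u) (N : Type v) [Field K] [Field N] [Algebra K N] :
    Prop :=
  ∃ (M : Type v) (_ : Field M) (_ : Algebra K M) (_ : N →ₐ[K] M), IsQuadraticTower K M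


open IntermediateField Polynomial

/-- One radical step between intermediate fields. -/
def RadStep (P : ℕ → Prop) (K : Type*) [Field K] {Ω : Type*} [Field Ω] [Algebra K Ω]
    (F G : IntermediateField K Ω) : Prop :=
  ∃ x : Ω, ∃ n : ℕ, P n ∧ x ^ n ∈ F ∧ G = F ⊔ IntermediateField.adjoin K {x}

/-- Chain from `⊥` to `⊤` of radical steps. -/
def TowerP (P : ℕ → Prop) (K M : Type*) [Field K] [Field M] [Algebra K M] : Prop :=
  Relation.ReflTransGen (RadStep P K) (⊥ : IntermediateField K M) ⊤

theorem reflTransGen_iff_fin_chain {α : Type*} {r : α → α → Prop} {a b : α} :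
    Relation.ReflTransGen r a b ↔ ∃ t : ℕ, ∃ c : Fin (t + 1) → α,
      c 0 = a ∧ c (Fin.last t) = b ∧ ∀ i : Fin t, r (c i.castSucc) (c i.succ) := by
  constructor
  · intro h
    induction h with
    | refl => exact ⟨0, fun _ => a, rfl, rfl, fun i => i.elim0⟩
    | @tail b' c' h1 h2 ih =>
      obtain ⟨t, c, h0, hl, hs⟩ := ih
      refine ⟨t + 1, (Fin.snoc c c' : Fin (t + 2) → α), ?_, Fin.snoc_last _ _, ?_⟩
      · have h : (0 : Fin (t + 2)) = Fin.castSucc 0 := rfl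
        rw [h, Fin.snoc_castSucc, h0]
      · intro i
        induction i using Fin.lastCases with
        | last =>
          show r ((Fin.snoc c c' : Fin (t + 2) → α) (Fin.last t).castSucc)
            ((Fin.snoc c c' : Fin (t + 2) → α) (Fin.last t).succ)
          rw [Fin.snoc_castSucc, hl, Fin.succ_last, Fin.snoc_last]
          exact h2
        | cast j =>
          show r ((Fin.snoc c c' : Fin (t + 2) → α) j.castSucc.castSucc)
            ((Fin.snoc c c' : Fin (t + 2) → α) j.castSucc.succ)
          rw [Fin.snoc_castSucc, Fin.succ_castSucc, Fin.snoc_castSucc]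
          exact hs j
  · rintro ⟨t, c, rfl, rfl, hs⟩
    have key : ∀ i : Fin (t + 1), Relation.ReflTransGen r (c 0) (c i) := by
      intro i
      induction i using Fin.induction with
      | zero => exact .refl
      | succ j ih => exact ih.tail (hs j)
    exact key _

section AuxTower

variable {K : Type*} [Field K]

theorem towerP.finiteDimensional' {P : ℕ → Prop} (hP : ∀ n, P n → 0 < n)
    {M : Type*} [Field M] [Algebra K M] (h : TowerP P K M) : FiniteDimensional K M := by
  have key : ∀ F G : IntermediateField K M, Relation.ReflTransGen (RadStep P K) F G →
      FiniteDimensional K F → FiniteDimensional K G := by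
    intro F G hFG
    induction hFG with
    | refl => exact id
    | @tail B G' h1 hstep ih =>
      intro hF
      haveI hmid : FiniteDimensional K B := ih hF
      obtain ⟨x, n, hn, hxn, rfl⟩ := hstep
      have hxi : IsIntegral B x := by
        refine ⟨Polynomial.X ^ n - Polynomial.C (⟨x ^ n, hxn⟩ : B),
          Polynomial.monic_X_pow_sub_C _ (Nat.pos_iff_ne_zero.mp (hP n hn)), ?_⟩
        simp [Polynomial.eval₂_sub, sub_eq_zero]
      have hxK : IsIntegral K x := by
        haveI : Algebra.IsIntegral K B := Algebra.IsIntegral.of_finite K B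
        exact isIntegral_trans x hxi
      haveI := IntermediateField.adjoin.finiteDimensional hxK
      exact IntermediateField.finiteDimensional_sup _ _
  haveI : FiniteDimensional K (⊤ : IntermediateField K M) := key ⊥ ⊤ h inferInstance
  exact (IntermediateField.topEquiv (F := K) (E := M)).toLinearEquiv.finiteDimensional

theorem towerP.reaches_sup_fieldRange {P : ℕ → Prop} {M Ω : Type*} [Field M] [Algebra K M]
    [Field Ω] [Algebra K Ω] (h : TowerP P K M) (σ : M →ₐ[K] Ω) (F : IntermediateField K Ω) :
    Relation.ReflTransGen (RadStep P K) F (F ⊔ σ.fieldRange) := by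
  have key : ∀ A B : IntermediateField K M, Relation.ReflTransGen (RadStep P K) A B →
      Relation.ReflTransGen (RadStep P K) (F ⊔ A.map σ) (F ⊔ B.map σ) := by
    intro A B hAB
    induction hAB with
    | refl => exact .refl
    | @tail B' G' h1 hstep ih =>
      obtain ⟨x, n, hn, hxn, rfl⟩ := hstep
      refine ih.tail ⟨σ x, n, hn, ?_, ?_⟩
      · have hmem : σ x ^ n ∈ B'.map σ := by
          rw [← map_pow]; exact ⟨x ^ n, hxn, rfl⟩
        exact SetLike.le_def.mp le_sup_right hmem
      · rw [IntermediateField.map_sup, IntermediateField.adjoin_map, Set.image_singleton,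
          sup_assoc]
  have h2 := key ⊥ ⊤ h
  rwa [IntermediateField.map_bot, sup_bot_eq, ← AlgHom.fieldRange_eq_map] at h2

theorem towerP.of_algEquiv {P : ℕ → Prop} {M M' : Type*} [Field M] [Algebra K M]
    [Field M'] [Algebra K M'] (e : M ≃ₐ[K] M') (h : TowerP P K M) : TowerP P K M' := by
  have h2 := towerP.reaches_sup_fieldRange h (e : M →ₐ[K] M') ⊥
  rwa [bot_sup_eq, AlgEquiv.fieldRange_eq_top e] at h2

theorem towerP_of_iSup_fieldRange {P : ℕ → Prop} {M A : Type*} [Field M] [Algebra K M]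
    [Field A] [Algebra K A] [FiniteDimensional K M] (h : TowerP P K M)
    (htop : ⨆ σ : M →ₐ[K] A, σ.fieldRange = ⊤) : TowerP P K A := by
  have key : ∀ s : Finset (M →ₐ[K] A),
      Relation.ReflTransGen (RadStep P K) ⊥ (s.sup fun σ => σ.fieldRange) := by
    intro s
    classical
    induction s using Finset.induction with
    | empty => rw [Finset.sup_empty]
    | @insert σ s hσ ih =>
      rw [Finset.sup_insert, sup_comm]
      exact ih.trans (towerP.reaches_sup_fieldRange h _ _)
  have h2 := key Finset.univ
  rwa [TowerP, ← htop, ← Finset.sup_univ_eq_iSup]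

theorem exists_embed_tower {P : ℕ → Prop} (hP : ∀ n, P n → 0 < n)
    {N : Type v} [Field N] [Algebra K N]
    {B : Type*} [Field B] [Algebra K B] (hB : TowerP P K B) (e : N →ₐ[K] B) :
    ∃ (M : Type v) (_ : Field M) (_ : Algebra K M) (_ : N →ₐ[K] M), TowerP P K M := by
  haveI : FiniteDimensional K B := towerP.finiteDimensional' hP hB
  haveI : Algebra.IsAlgebraic K B := Algebra.IsAlgebraic.of_finite K B
  let χ : B →ₐ[K] AlgebraicClosure N := IsAlgClosed.lift
  exact ⟨↥χ.fieldRange, inferInstance, inferInstance,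
    (χ.comp e).codRestrict χ.fieldRange.toSubalgebra (fun x => ⟨e x, rfl⟩),
    towerP.of_algEquiv (AlgEquiv.ofInjectiveField χ) hB⟩

end AuxTower

theorem master_towerP {P : ℕ → Prop} (hP : ∀ n, P n → 0 < n)
    (K : Type u) (L : Type v) (N : Type w) [Field K] [Field L] [Field N]
    [Algebra K L] [Algebra K N] [Algebra L N] [IsScalarTower K L N]
    [FiniteDimensional K L] [Normal K N]
    (hmin : ∀ E : IntermediateField K N,
      (∀ x : L, algebraMap L N x ∈ E) → Normal K ↥E → E = ⊤) :
    (∃ (M : Type v) (_ : Field M) (_ : Algebra K M) (_ : L →ₐ[K] M), TowerP P K M) →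
    (∃ (M : Type w) (_ : Field M) (_ : Algebra K M) (_ : N →ₐ[K] M), TowerP P K M) := by
  rintro ⟨M, _, _, φ, hM⟩
  haveI : FiniteDimensional K M := towerP.finiteDimensional' hP hM
  haveI : Algebra.IsAlgebraic K M := Algebra.IsAlgebraic.of_finite K M
  haveI : Algebra.IsAlgebraic K (AlgebraicClosure M) :=
    Algebra.IsAlgebraic.trans K M (AlgebraicClosure M)
  haveI : IsAlgClosure K (AlgebraicClosure M) := ⟨inferInstance, inferInstance⟩
  haveI : Normal K (AlgebraicClosure M) := IsAlgClosure.normal K (AlgebraicClosure M)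
  haveI hne : Nonempty (M →ₐ[K] AlgebraicClosure M) :=
    ⟨IsScalarTower.toAlgHom K M (AlgebraicClosure M)⟩
  haveI : Normal K ↥(normalClosure K M (AlgebraicClosure M)) :=
    normalClosure.normal K M (AlgebraicClosure M)
  -- the normal closure of `M` carries a radical tower
  have htop : ⨆ σ : M →ₐ[K] ↥(normalClosure K M (AlgebraicClosure M)), σ.fieldRange = ⊤ := by
    haveI : Nonempty (M →ₐ[K] ↥(normalClosure K M (AlgebraicClosure M))) :=
      ⟨(normalClosure.algHomEquiv K M (AlgebraicClosure M)).symm hne.some⟩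
    have h1 : normalClosure K M ↥(normalClosure K M (AlgebraicClosure M)) = ⊤ :=
      (normalClosure_eq_iSup_adjoin' K M ↥(normalClosure K M (AlgebraicClosure M))).trans
        (isNormalClosure_normalClosure K M (AlgebraicClosure M)).adjoin_rootSet
    rw [normalClosure_def] at h1
    exact h1
  have hA : TowerP P K ↥(normalClosure K M (AlgebraicClosure M)) :=
    towerP_of_iSup_fieldRange hM htop
  -- `N` is a normal closure of `L` in the sense of `IsNormalClosure`
  haveI : Algebra.IsIntegral K L := Algebra.IsIntegral.of_finite K L
  have hsplitsN : ∀ x : L, ((minpoly K x).map (algebraMap K N)).Splits := fun x => by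
    rw [← minpoly.algHom_eq (IsScalarTower.toAlgHom K L N)
      (IsScalarTower.toAlgHom K L N).injective x]
    exact Normal.splits ‹Normal K N› _
  haveI : ∀ x : L, Normal K
      ↥(IntermediateField.adjoin K ((minpoly K x).rootSet N)) := fun x =>
    Normal.of_isSplittingField (minpoly K x)
      (hFEp := IntermediateField.adjoin_rootSet_isSplittingField (hsplitsN x))
  haveI hNCl : IsNormalClosure K L N := by
    refine ⟨hsplitsN, hmin _ (fun x => ?_) (IntermediateField.normal_iSup K N _)⟩
    have hx0 : algebraMap L N x ∈ (minpoly K x).rootSet N := by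
      rw [Polynomial.mem_rootSet]
      refine ⟨minpoly.ne_zero (Algebra.IsIntegral.isIntegral x), ?_⟩
      rw [Polynomial.aeval_algebraMap_apply, minpoly.aeval, map_zero]
    exact le_iSup (fun x : L => IntermediateField.adjoin K ((minpoly K x).rootSet N)) x
      (IntermediateField.subset_adjoin _ _ hx0)
  -- embed `N` into the normal closure of `M`
  have hφ'' : ∀ l : L, ((IsScalarTower.toAlgHom K M (AlgebraicClosure M)).comp φ) l ∈
      normalClosure K M (AlgebraicClosure M) := fun l =>
    (IsScalarTower.toAlgHom K M (AlgebraicClosure M)).fieldRange_le_normalClosure ⟨φ l, rfl⟩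
  let φ'' : L →ₐ[K] ↥(normalClosure K M (AlgebraicClosure M)) :=
    ((IsScalarTower.toAlgHom K M (AlgebraicClosure M)).comp φ).codRestrict _ hφ''
  have hsplitsA : ∀ x : L,
      ((minpoly K x).map (algebraMap K ↥(normalClosure K M (AlgebraicClosure M)))).Splits := fun x => by
    rw [← minpoly.algHom_eq φ'' φ''.injective x]
    exact Normal.splits ‹Normal K ↥(normalClosure K M (AlgebraicClosure M))› _
  exact exists_embed_tower hP hA (IsNormalClosure.lift hsplitsA)

theorem isRadicalTower_iff_towerP (K M : Type*) [Field K] [Field M] [Algebra K M] :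
    IsRadicalTower K M ↔ TowerP (fun n => 0 < n) K M := by
  rw [TowerP, reflTransGen_iff_fin_chain]
  exact Iff.rfl

theorem isQuadraticTower_iff_towerP (K M : Type*) [Field K] [Field M] [Algebra K M] :
    IsQuadraticTower K M ↔ TowerP (fun n => n = 2) K M := by
  rw [TowerP, reflTransGen_iff_fin_chain]
  refine exists_congr fun t => exists_congr fun c => and_congr_right fun _ =>
    and_congr_right fun _ => forall_congr' fun i => ?_
  constructor
  · rintro ⟨x, hx, hEq⟩; exact ⟨x, 2, rfl, hx, hEq⟩
  · rintro ⟨x, n, rfl, hx, hEq⟩; exact ⟨x, hx, hEq⟩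

theorem radicallySolvableExt_iff_towerP (K : Type u) (N : Type v) [Field K] [Field N]
    [Algebra K N] : RadicallySolvableExt K N ↔
      ∃ (M : Type v) (_ : Field M) (_ : Algebra K M) (_ : N →ₐ[K] M),
        TowerP (fun n => 0 < n) K M :=
  exists_congr fun M => exists_congr fun _ => exists_congr fun _ => exists_congr fun _ =>
    isRadicalTower_iff_towerP K M

theorem quadraticallySolvableExt_iff_towerP (K : Type u) (N : Type v) [Field K] [Field N]
    [Algebra K N] : QuadraticallySolvableExt K N ↔
      ∃ (M : Type v) (_ : Field M) (_ : Algebra K M) (_ : N →ₐ[K] M),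
        TowerP (fun n => n = 2) K M :=
  exists_congr fun M => exists_congr fun _ => exists_congr fun _ => exists_congr fun _ =>
    isQuadraticTower_iff_towerP K M


/-- Lemma: in characteristic zero, a finite extension `L : K` is radically
(respectively quadratically) solvable iff its normal closure `N` over `K` is. -/
theorem statement2 (K L N : Type*) [Field K] [Field L] [Field N]
    [Algebra K L] [Algebra K N] [Algebra L N] [IsScalarTower K L N]
    [CharZero K] [FiniteDimensional K L] [Normal K N]
    (hmin : ∀ E : IntermediateField K N,
      (∀ x : L, algebraMap L N x ∈ E) → Normal K ↥E → E = ⊤) :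
    (RadicallySolvableExt K L ↔ RadicallySolvableExt K N) ∧
    (QuadraticallySolvableExt K L ↔ QuadraticallySolvableExt K N) := by
  constructor
  · rw [radicallySolvableExt_iff_towerP, radicallySolvableExt_iff_towerP]
    constructor
    · exact master_towerP (fun n h => h) K L N hmin
    · rintro ⟨M, _, _, g, hM⟩
      exact exists_embed_tower (fun n h => h) hM (g.comp (IsScalarTower.toAlgHom K L N))
  · rw [quadraticallySolvableExt_iff_towerP, quadraticallySolvableExt_iff_towerP]
    constructor
    · exact master_towerP (fun n (h : n = 2) => h ▸ (by norm_num : (0:ℕ) < 2)) K L N hmin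
    · rintro ⟨M, _, _, g, hM⟩
      exact exists_embed_tower (fun n (h : n = 2) => h ▸ (by norm_num : (0:ℕ) < 2)) hM
        (g.comp (IsScalarTower.toAlgHom K L N))
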